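/- There exists C > 0, independent of a, such that for every a > 0, every x ∈ ℝ^N ∖ Λ and every (u,v) ∈ ℝ²: |u⁻ H_u(x,u,v) + v⁻ H_v(x,u,v)| ≤ C A ((u⁻)² + (v⁻)²), where t⁻ = min{t,0}. Moreover, u⁻ Q_u(u,v) + v⁻ Q_v(u,v) = 0 for every (u,v) ∈ ℝ². -/

import Mathlib

open MeasureTheory Real Set Filter

noncomputable section

abbrev Euc (N : ℕ) := EuclideanSpace ℝ (Fin N)

/-- Partial derivative of a two-variable real function in the first variable. -/
def pdU (f : ℝ → ℝ → ℝ) (u v : ℝ) : ℝ := deriv (fun t => f t v) u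

/-- Partial derivative of a two-variable real function in the second variable. -/
def pdV (f : ℝ → ℝ → ℝ) (u v : ℝ) : ℝ := deriv (fun t => f u t) v

/-- Integrand of the Gagliardo seminorm. -/
def gagKer (N : ℕ) (s : ℝ) (u : Euc N → ℝ) (z : Euc N × Euc N) : ℝ :=
  (u z.1 - u z.2) ^ 2 / ‖z.1 - z.2‖ ^ ((N : ℝ) + 2 * s)

/-- Squared Gagliardo seminorm `[u]²`. -/
def gagSq (N : ℕ) (s : ℝ) (u : Euc N → ℝ) : ℝ := ∫ z, gagKer N s u z

/-- Membership in the fractional Sobolev space `H^s(ℝ^N)`. -/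
def MemHs (N : ℕ) (s : ℝ) (u : Euc N → ℝ) : Prop :=
  MemLp u 2 (volume : Measure (Euc N)) ∧ Integrable (gagKer N s u)

/-- The nonlinearity `Q` together with assumptions (Q1)-(Q6); `Q` is `C²` on the closed
first quadrant and extended by `0` outside of it.  Its partial derivatives are `pdU Q`,
`pdV Q`. -/
structure QSetup (p : ℝ) : Type where
  Q : ℝ → ℝ → ℝ
  smooth : ContDiffOn ℝ 2 (fun z : ℝ × ℝ => Q z.1 z.2) (Ici 0 ×ˢ Ici 0)
  ext_zero : ∀ u v : ℝ, u ≤ 0 ∨ v ≤ 0 → Q u v = 0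
  q1 : ∀ t : ℝ, 0 < t → ∀ u v : ℝ, 0 ≤ u → 0 ≤ v → Q (t * u) (t * v) = t ^ p * Q u v
  q2 : ∃ C : ℝ, 0 < C ∧ ∀ u v : ℝ, 0 ≤ u → 0 ≤ v →
        |pdU Q u v| + |pdV Q u v| ≤ C * (u ^ (p - 1) + v ^ (p - 1))
  q3 : pdU Q 0 1 = 0 ∧ pdV Q 1 0 = 0
  q4 : pdU Q 1 0 = 0 ∧ pdV Q 0 1 = 0
  q5 : ∀ u v : ℝ, 0 < u → 0 < v → 0 < Q u v
  q6 : ∀ u v : ℝ, 0 ≤ u → 0 ≤ v → 0 ≤ pdU Q u v ∧ 0 ≤ pdV Q u v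

/-- The potentials `V`, `W`, the set `Λ`, the point `x₀` and `ρ₀`, with (H1)-(H3). -/
structure PotSetup (N : ℕ) : Type where
  V : Euc N → ℝ
  W : Euc N → ℝ
  Λ : Set (Euc N)
  x₀ : Euc N
  ρ₀ : ℝ
  contV : Continuous V
  contW : Continuous W
  openΛ : IsOpen Λ
  bddΛ : Bornology.IsBounded Λ
  x₀mem : x₀ ∈ Λ
  ρ₀pos : 0 < ρ₀
  h1 : ∀ x ∈ frontier Λ, ρ₀ ≤ V x ∧ ρ₀ ≤ W x
  h2 : V x₀ < ρ₀ ∧ W x₀ < ρ₀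
  h3 : (∀ x, V x₀ ≤ V x) ∧ (∀ x, W x₀ ≤ W x) ∧ 0 < V x₀ ∧ 0 < W x₀

/-- `‖(u,v)‖²_ξ` for the autonomous problem with frozen potentials `V(ξ)`, `W(ξ)`. -/
def normSqXi {N : ℕ} (s : ℝ) (P : PotSetup N) (ξ : Euc N) (u v : Euc N → ℝ) : ℝ :=
  gagSq N s u + gagSq N s v + ∫ x, (P.V ξ * u x ^ 2 + P.W ξ * v x ^ 2)

/-- The autonomous energy functional `J_ξ`. -/
def Jxi {N : ℕ} (s : ℝ) {p : ℝ} (QS : QSetup p) (P : PotSetup N) (ξ : Euc N)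
    (u v : Euc N → ℝ) : ℝ :=
  (1 / 2) * normSqXi s P ξ u v - ∫ x, QS.Q (u x) (v x)

/-- The Nehari manifold `N_ξ` of the autonomous functional `J_ξ`. -/
def NehariXi {N : ℕ} (s : ℝ) {p : ℝ} (QS : QSetup p) (P : PotSetup N) (ξ : Euc N) :
    Set ((Euc N → ℝ) × (Euc N → ℝ)) :=
  {w | MemHs N s w.1 ∧ MemHs N s w.2 ∧ w ≠ (0, 0) ∧
    normSqXi s P ξ w.1 w.2 =
      ∫ x, (w.1 x * pdU QS.Q (w.1 x) (w.2 x) + w.2 x * pdV QS.Q (w.1 x) (w.2 x))}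

/-- `C(ξ) = inf_{(u,v) ∈ N_ξ} J_ξ(u,v)`. -/
def Cmin {N : ℕ} (s : ℝ) {p : ℝ} (QS : QSetup p) (P : PotSetup N) (ξ : Euc N) : ℝ :=
  sInf ((fun w : (Euc N → ℝ) × (Euc N → ℝ) => Jxi s QS P ξ w.1 w.2) '' NehariXi s QS P ξ)

/-- The cut-off function `η` used in the penalization, for a given `a > 0`. -/
structure EtaSetup (a cη : ℝ) : Type where
  η : ℝ → ℝ
  smooth : ContDiff ℝ 2 η
  anti : Antitone η
  mem01 : ∀ t, η t ∈ Icc (0 : ℝ) 1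
  eq_one : ∀ t, t ≤ a → η t = 1
  eq_zero : ∀ t, 5 * a ≤ t → η t = 0
  bd1 : ∀ t, |deriv η t| ≤ cη / a
  bd2 : ∀ t, |deriv (deriv η) t| ≤ cη / a ^ 2

/-- `A = max { Q(u,v)/(u²+v²) : a ≤ √(u²+v²) ≤ 5a }`. -/
def Aconst {p : ℝ} (QS : QSetup p) (a : ℝ) : ℝ :=
  sSup ((fun z : ℝ × ℝ => QS.Q z.1 z.2 / (z.1 ^ 2 + z.2 ^ 2)) ''
    {z : ℝ × ℝ | a ≤ Real.sqrt (z.1 ^ 2 + z.2 ^ 2) ∧ Real.sqrt (z.1 ^ 2 + z.2 ^ 2) ≤ 5 * a})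

/-- The penalized nonlinearity `Q̂`. -/
def Qhat {p : ℝ} (QS : QSetup p) (η : ℝ → ℝ) (A u v : ℝ) : ℝ :=
  η (Real.sqrt (u ^ 2 + v ^ 2)) * QS.Q u v +
    (1 - η (Real.sqrt (u ^ 2 + v ^ 2))) * (A * (u ^ 2 + v ^ 2))

/-- The penalized function `H(x,u,v) = χ_Λ(x) Q(u,v) + (1-χ_Λ(x)) Q̂(u,v)`. -/
def Hpen {N : ℕ} {p : ℝ} (QS : QSetup p) (η : ℝ → ℝ) (A : ℝ) (Λ : Set (Euc N))
    (x : Euc N) (u v : ℝ) : ℝ :=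
  Λ.indicator (fun _ => (1 : ℝ)) x * QS.Q u v +
    (1 - Λ.indicator (fun _ => (1 : ℝ)) x) * Qhat QS η A u v

/-- `H_u`. -/
def HpenU {N : ℕ} {p : ℝ} (QS : QSetup p) (η : ℝ → ℝ) (A : ℝ) (Λ : Set (Euc N))
    (x : Euc N) (u v : ℝ) : ℝ := pdU (Hpen QS η A Λ x) u v

/-- `H_v`. -/
def HpenV {N : ℕ} {p : ℝ} (QS : QSetup p) (η : ℝ → ℝ) (A : ℝ) (Λ : Set (Euc N))
    (x : Euc N) (u v : ℝ) : ℝ := pdV (Hpen QS η A Λ x) u v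

/-- `H_uu`. -/
def HpenUU {N : ℕ} {p : ℝ} (QS : QSetup p) (η : ℝ → ℝ) (A : ℝ) (Λ : Set (Euc N))
    (x : Euc N) (u v : ℝ) : ℝ := pdU (HpenU QS η A Λ x) u v

/-- `H_uv`. -/
def HpenUV {N : ℕ} {p : ℝ} (QS : QSetup p) (η : ℝ → ℝ) (A : ℝ) (Λ : Set (Euc N))
    (x : Euc N) (u v : ℝ) : ℝ := pdV (HpenU QS η A Λ x) u v

/-- `H_vv`. -/
def HpenVV {N : ℕ} {p : ℝ} (QS : QSetup p) (η : ℝ → ℝ) (A : ℝ) (Λ : Set (Euc N))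
    (x : Euc N) (u v : ℝ) : ℝ := pdV (HpenV QS η A Λ x) u v

/-- `‖(u,v)‖²_ε`. -/
def normSqE {N : ℕ} (s : ℝ) (P : PotSetup N) (ε : ℝ) (u v : Euc N → ℝ) : ℝ :=
  gagSq N s u + gagSq N s v + ∫ x, (P.V (ε • x) * u x ^ 2 + P.W (ε • x) * v x ^ 2)

/-- Membership in the space `X_ε`. -/
def MemXe {N : ℕ} (s : ℝ) (P : PotSetup N) (ε : ℝ) (u v : Euc N → ℝ) : Prop :=
  MemHs N s u ∧ MemHs N s v ∧
    Integrable (fun x => P.V (ε • x) * u x ^ 2 + P.W (ε • x) * v x ^ 2)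

/-- The penalized energy functional `J_ε`. -/
def Je {N : ℕ} (s : ℝ) {p : ℝ} (QS : QSetup p) (η : ℝ → ℝ) (A : ℝ) (P : PotSetup N)
    (ε : ℝ) (u v : Euc N → ℝ) : ℝ :=
  (1 / 2) * normSqE s P ε u v - ∫ x, Hpen QS η A P.Λ (ε • x) (u x) (v x)

/-- The pairing `⟨J'_ε(u,v),(φ,ψ)⟩`. -/
def pairJe {N : ℕ} (s : ℝ) {p : ℝ} (QS : QSetup p) (η : ℝ → ℝ) (A : ℝ) (P : PotSetup N)
    (ε : ℝ) (u v φ ψ : Euc N → ℝ) : ℝ :=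
  (∫ z : Euc N × Euc N, (u z.1 - u z.2) * (φ z.1 - φ z.2) / ‖z.1 - z.2‖ ^ ((N : ℝ) + 2 * s)) +
  (∫ z : Euc N × Euc N, (v z.1 - v z.2) * (ψ z.1 - ψ z.2) / ‖z.1 - z.2‖ ^ ((N : ℝ) + 2 * s)) +
  (∫ x, (P.V (ε • x) * u x * φ x + P.W (ε • x) * v x * ψ x)) -
  (∫ x, (φ x * HpenU QS η A P.Λ (ε • x) (u x) (v x) +
         ψ x * HpenV QS η A P.Λ (ε • x) (u x) (v x)))

/-- The Nehari manifold `N_ε` of the penalized functional `J_ε`. -/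
def NehariE {N : ℕ} (s : ℝ) {p : ℝ} (QS : QSetup p) (η : ℝ → ℝ) (A : ℝ) (P : PotSetup N)
    (ε : ℝ) : Set ((Euc N → ℝ) × (Euc N → ℝ)) :=
  {w | MemXe s P ε w.1 w.2 ∧ w ≠ (0, 0) ∧
    normSqE s P ε w.1 w.2 =
      ∫ x, (w.1 x * HpenU QS η A P.Λ (ε • x) (w.1 x) (w.2 x) +
            w.2 x * HpenV QS η A P.Λ (ε • x) (w.1 x) (w.2 x))}

end


section Stmt13Helpers

variable {p : ℝ}

private lemma pdU_zero_of_neg (QS : QSetup p) {u : ℝ} (v : ℝ) (hu : u < 0) :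
    pdU QS.Q u v = 0 := by
  have he : (fun t => QS.Q t v) =ᶠ[nhds u] (fun _ => (0:ℝ)) := by
    filter_upwards [Iio_mem_nhds hu] with t ht using QS.ext_zero t v (Or.inl ht.le)
  rw [pdU, he.deriv_eq, deriv_const]

private lemma pdV_zero_of_neg (QS : QSetup p) (u : ℝ) {v : ℝ} (hv : v < 0) :
    pdV QS.Q u v = 0 := by
  have he : (fun t => QS.Q u t) =ᶠ[nhds v] (fun _ => (0:ℝ)) := by
    filter_upwards [Iio_mem_nhds hv] with t ht using QS.ext_zero u t (Or.inr ht.le)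
  rw [pdV, he.deriv_eq, deriv_const]

private lemma eta_slope {a cη : ℝ} (ha : 0 < a) (hcη : 0 < cη) (E : EtaSetup a cη)
    {r : ℝ} (hr : 0 ≤ r) : |deriv E.η r| * r ≤ 5 * cη := by
  rcases le_or_gt r (5 * a) with h | h
  · calc |deriv E.η r| * r ≤ (cη / a) * (5 * a) :=
          mul_le_mul (E.bd1 r) h hr (by positivity)
      _ = 5 * cη := by field_simp
  · have he : E.η =ᶠ[nhds r] (fun _ => (0:ℝ)) := by
      filter_upwards [Ioi_mem_nhds h] with t ht using E.eq_zero t ht.le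
    rw [he.deriv_eq, deriv_const]
    simp
    positivity

private lemma hasDerivAt_sqrtsq {u : ℝ} (v : ℝ) (hpos : 0 < u ^ 2 + v ^ 2) :
    HasDerivAt (fun t => Real.sqrt (t ^ 2 + v ^ 2)) (u / Real.sqrt (u ^ 2 + v ^ 2)) u := by
  have h1 : HasDerivAt (fun t : ℝ => t ^ 2 + v ^ 2) (2 * u) u := by
    simpa using (hasDerivAt_pow 2 u).add_const (v ^ 2)
  have h2 := (Real.hasDerivAt_sqrt hpos.ne').comp u h1
  refine h2.congr_deriv ?_
  have hs : 0 < Real.sqrt (u ^ 2 + v ^ 2) := Real.sqrt_pos.2 hpos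
  field_simp

private lemma qhatU_bound (QS : QSetup p) {a cη : ℝ} (ha : 0 < a) (hcη : 0 < cη)
    (E : EtaSetup a cη) {A : ℝ} (hA : 0 ≤ A) {u : ℝ} (v : ℝ) (hu : u < 0) :
    |u * pdU (Qhat QS E.η A) u v| ≤ (5 * cη + 2) * A * u ^ 2 := by
  have hpos : 0 < u ^ 2 + v ^ 2 := by
    nlinarith [sq_nonneg v, mul_pos (neg_pos.2 hu) (neg_pos.2 hu)]
  set r := Real.sqrt (u ^ 2 + v ^ 2) with hrdef
  have hrpos : 0 < r := Real.sqrt_pos.2 hpos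
  have hr2 : u ^ 2 + v ^ 2 = r ^ 2 := (Real.sq_sqrt hpos.le).symm
  -- the local form of Qhat near u
  set g : ℝ → ℝ := fun t => (1 - E.η (Real.sqrt (t ^ 2 + v ^ 2))) * (A * (t ^ 2 + v ^ 2))
    with hgdef
  have he : (fun t => Qhat QS E.η A t v) =ᶠ[nhds u] g := by
    filter_upwards [Iio_mem_nhds hu] with t ht
    have hq : QS.Q t v = 0 := QS.ext_zero t v (Or.inl ht.le)
    simp [Qhat, hq, hgdef]
  have hsq : HasDerivAt (fun t : ℝ => t ^ 2 + v ^ 2) (2 * u) u := by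
    simpa using (hasDerivAt_pow 2 u).add_const (v ^ 2)
  have hη : HasDerivAt E.η (deriv E.η r) r :=
    ((E.smooth.differentiable (by norm_num)) r).hasDerivAt
  have hcomp : HasDerivAt (fun t => E.η (Real.sqrt (t ^ 2 + v ^ 2)))
      (deriv E.η r * (u / r)) u := hη.comp u (hasDerivAt_sqrtsq v hpos)
  have hg : HasDerivAt g
      ((0 - deriv E.η r * (u / r)) * (A * (u ^ 2 + v ^ 2)) +
        (1 - E.η r) * (A * (2 * u))) u :=
    ((hasDerivAt_const u (1:ℝ)).sub hcomp).mul (hsq.const_mul A)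
  have hderiv : pdU (Qhat QS E.η A) u v =
      (0 - deriv E.η r * (u / r)) * (A * (u ^ 2 + v ^ 2)) + (1 - E.η r) * (A * (2 * u)) := by
    rw [pdU, he.deriv_eq, hg.deriv]
  rw [hderiv, mul_add]
  have ht1 : u * ((0 - deriv E.η r * (u / r)) * (A * (u ^ 2 + v ^ 2))) =
      -(deriv E.η r * r * (u ^ 2 * A)) := by
    rw [hr2]; field_simp; ring
  have ht2 : u * ((1 - E.η r) * (A * (2 * u))) = (1 - E.η r) * (2 * A * u ^ 2) := by ring
  have hb1 : |u * ((0 - deriv E.η r * (u / r)) * (A * (u ^ 2 + v ^ 2)))| ≤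
      5 * cη * (u ^ 2 * A) := by
    rw [ht1, abs_neg, abs_mul, abs_mul, abs_of_nonneg hrpos.le,
      abs_of_nonneg (by positivity : (0:ℝ) ≤ u ^ 2 * A)]
    exact mul_le_mul_of_nonneg_right (eta_slope ha hcη E hrpos.le) (by positivity)
  have hb2 : |u * ((1 - E.η r) * (A * (2 * u)))| ≤ 2 * A * u ^ 2 := by
    rw [ht2]
    have hm := E.mem01 r
    have h1 : 0 ≤ 1 - E.η r := by linarith [hm.2]
    have h2 : 1 - E.η r ≤ 1 := by linarith [hm.1]
    rw [abs_mul, abs_of_nonneg h1, abs_of_nonneg (by positivity : (0:ℝ) ≤ 2 * A * u ^ 2)]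
    nlinarith [mul_nonneg hm.1 (by positivity : (0:ℝ) ≤ 2 * A * u ^ 2)]
  calc |u * ((0 - deriv E.η r * (u / r)) * (A * (u ^ 2 + v ^ 2))) +
        u * ((1 - E.η r) * (A * (2 * u)))| ≤ _ + _ := abs_add_le _ _
    _ ≤ 5 * cη * (u ^ 2 * A) + 2 * A * u ^ 2 := add_le_add hb1 hb2
    _ = (5 * cη + 2) * A * u ^ 2 := by ring

private lemma qhatV_bound (QS : QSetup p) {a cη : ℝ} (ha : 0 < a) (hcη : 0 < cη)
    (E : EtaSetup a cη) {A : ℝ} (hA : 0 ≤ A) (u : ℝ) {v : ℝ} (hv : v < 0) :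
    |v * pdV (Qhat QS E.η A) u v| ≤ (5 * cη + 2) * A * v ^ 2 := by
  have hpos : 0 < u ^ 2 + v ^ 2 := by
    nlinarith [sq_nonneg u, mul_pos (neg_pos.2 hv) (neg_pos.2 hv)]
  set r := Real.sqrt (u ^ 2 + v ^ 2) with hrdef
  have hrpos : 0 < r := Real.sqrt_pos.2 hpos
  have hr2 : u ^ 2 + v ^ 2 = r ^ 2 := (Real.sq_sqrt hpos.le).symm
  set g : ℝ → ℝ := fun t => (1 - E.η (Real.sqrt (u ^ 2 + t ^ 2))) * (A * (u ^ 2 + t ^ 2))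
    with hgdef
  have he : (fun t => Qhat QS E.η A u t) =ᶠ[nhds v] g := by
    filter_upwards [Iio_mem_nhds hv] with t ht
    have hq : QS.Q u t = 0 := QS.ext_zero u t (Or.inr ht.le)
    simp [Qhat, hq, hgdef]
  have hsq : HasDerivAt (fun t : ℝ => u ^ 2 + t ^ 2) (2 * v) v := by
    simpa using ((hasDerivAt_pow 2 v).const_add (u ^ 2))
  have hsqrt : HasDerivAt (fun t => Real.sqrt (u ^ 2 + t ^ 2)) (v / r) v := by
    have h2 := (Real.hasDerivAt_sqrt hpos.ne').comp v hsq
    refine h2.congr_deriv ?_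
    field_simp
    rfl
  have hη : HasDerivAt E.η (deriv E.η r) r :=
    ((E.smooth.differentiable (by norm_num)) r).hasDerivAt
  have hcomp : HasDerivAt (fun t => E.η (Real.sqrt (u ^ 2 + t ^ 2)))
      (deriv E.η r * (v / r)) v := hη.comp v hsqrt
  have hg : HasDerivAt g
      ((0 - deriv E.η r * (v / r)) * (A * (u ^ 2 + v ^ 2)) +
        (1 - E.η r) * (A * (2 * v))) v :=
    ((hasDerivAt_const v (1:ℝ)).sub hcomp).mul (hsq.const_mul A)
  have hderiv : pdV (Qhat QS E.η A) u v =
      (0 - deriv E.η r * (v / r)) * (A * (u ^ 2 + v ^ 2)) + (1 - E.η r) * (A * (2 * v)) := by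
    rw [pdV, he.deriv_eq, hg.deriv]
  rw [hderiv, mul_add]
  have ht1 : v * ((0 - deriv E.η r * (v / r)) * (A * (u ^ 2 + v ^ 2))) =
      -(deriv E.η r * r * (v ^ 2 * A)) := by
    rw [hr2]; field_simp; ring
  have hb1 : |v * ((0 - deriv E.η r * (v / r)) * (A * (u ^ 2 + v ^ 2)))| ≤
      5 * cη * (v ^ 2 * A) := by
    rw [ht1, abs_neg, abs_mul, abs_mul, abs_of_nonneg hrpos.le,
      abs_of_nonneg (by positivity : (0:ℝ) ≤ v ^ 2 * A)]
    exact mul_le_mul_of_nonneg_right (eta_slope ha hcη E hrpos.le) (by positivity)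
  have hb2 : |v * ((1 - E.η r) * (A * (2 * v)))| ≤ 2 * A * v ^ 2 := by
    have ht2 : v * ((1 - E.η r) * (A * (2 * v))) = (1 - E.η r) * (2 * A * v ^ 2) := by ring
    rw [ht2]
    have hm := E.mem01 r
    have h1 : 0 ≤ 1 - E.η r := by linarith [hm.2]
    have h2 : 1 - E.η r ≤ 1 := by linarith [hm.1]
    rw [abs_mul, abs_of_nonneg h1, abs_of_nonneg (by positivity : (0:ℝ) ≤ 2 * A * v ^ 2)]
    nlinarith [mul_nonneg hm.1 (by positivity : (0:ℝ) ≤ 2 * A * v ^ 2)]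
  calc |v * ((0 - deriv E.η r * (v / r)) * (A * (u ^ 2 + v ^ 2))) +
        v * ((1 - E.η r) * (A * (2 * v)))| ≤ _ + _ := abs_add_le _ _
    _ ≤ 5 * cη * (v ^ 2 * A) + 2 * A * v ^ 2 := add_le_add hb1 hb2
    _ = (5 * cη + 2) * A * v ^ 2 := by ring

private lemma Aconst_nonneg (QS : QSetup p) {a : ℝ} (ha : 0 < a) :
    0 ≤ Aconst QS a := by
  -- the defining set contains 0 (at the point (a,0)) and is bounded above
  obtain ⟨M, hM⟩ := (IsCompact.exists_bound_of_continuousOn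
    ((isCompact_Icc (a := (0:ℝ)) (b := 5 * a)).prod (isCompact_Icc (a := (0:ℝ)) (b := 5 * a)))
    ((QS.smooth.continuousOn).mono (by
      intro z hz
      exact ⟨hz.1.1, hz.2.1⟩)))
  have hmem : (0:ℝ) ∈ ((fun z : ℝ × ℝ => QS.Q z.1 z.2 / (z.1 ^ 2 + z.2 ^ 2)) ''
      {z : ℝ × ℝ | a ≤ Real.sqrt (z.1 ^ 2 + z.2 ^ 2) ∧ Real.sqrt (z.1 ^ 2 + z.2 ^ 2) ≤ 5 * a}) := by
    refine ⟨(a, 0), ?_, ?_⟩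
    · constructor <;> simp [Real.sqrt_sq ha.le] <;> linarith
    · simp [QS.ext_zero a 0 (Or.inr le_rfl)]
  have hbdd : BddAbove ((fun z : ℝ × ℝ => QS.Q z.1 z.2 / (z.1 ^ 2 + z.2 ^ 2)) ''
      {z : ℝ × ℝ | a ≤ Real.sqrt (z.1 ^ 2 + z.2 ^ 2) ∧ Real.sqrt (z.1 ^ 2 + z.2 ^ 2) ≤ 5 * a}) := by
    refine ⟨max M 0 / a ^ 2, ?_⟩
    rintro y ⟨z, ⟨hz1, hz2⟩, rfl⟩
    have hsum : a ^ 2 ≤ z.1 ^ 2 + z.2 ^ 2 := by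
      have h := mul_self_le_mul_self ha.le hz1
      rw [Real.mul_self_sqrt (by positivity)] at h
      nlinarith
    have hQle : QS.Q z.1 z.2 ≤ max M 0 := by
      rcases le_or_gt z.1 0 with h1 | h1
      · rw [QS.ext_zero z.1 z.2 (Or.inl h1)]; exact le_max_right _ _
      rcases le_or_gt z.2 0 with h2 | h2
      · rw [QS.ext_zero z.1 z.2 (Or.inr h2)]; exact le_max_right _ _
      have hz1' : z.1 ≤ 5 * a := by
        have h5 : z.1 ≤ Real.sqrt (z.1 ^ 2 + z.2 ^ 2) :=
          Real.le_sqrt' h1 |>.2 (by nlinarith [sq_nonneg z.2])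
        linarith
      have hz2' : z.2 ≤ 5 * a := by
        have h5 : z.2 ≤ Real.sqrt (z.1 ^ 2 + z.2 ^ 2) :=
          Real.le_sqrt' h2 |>.2 (by nlinarith [sq_nonneg z.1])
        linarith
      have hmem' : z ∈ (Icc (0:ℝ) (5*a)) ×ˢ (Icc (0:ℝ) (5*a)) :=
        ⟨⟨h1.le, hz1'⟩, ⟨h2.le, hz2'⟩⟩
      calc QS.Q z.1 z.2 ≤ |QS.Q z.1 z.2| := le_abs_self _
        _ ≤ M := by simpa using hM z hmem'
        _ ≤ max M 0 := le_max_left _ _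
    have hpos : 0 < z.1 ^ 2 + z.2 ^ 2 := by nlinarith [sq_nonneg a]
    exact div_le_div₀ (le_max_right M 0) hQle (by positivity) hsum
  exact le_csSup hbdd hmem

end Stmt13Helpers

/-- `|u⁻ H_u + v⁻ H_v| ≤ C A ((u⁻)² + (v⁻)²)` outside `Λ`, with `C`
independent of `a`; moreover `u⁻ Q_u(u,v) + v⁻ Q_v(u,v) = 0` on `ℝ²`. -/
theorem stmt13 {N : ℕ} (s p : ℝ) (hs : 0 < s ∧ s < 1) (hN : 2 * s < (N : ℝ))
    (hp : 2 < p ∧ p < 2 * (N : ℝ) / ((N : ℝ) - 2 * s))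
    (QS : QSetup p) (Λ : Set (Euc N)) (hΛo : IsOpen Λ) (hΛb : Bornology.IsBounded Λ)
    (cη : ℝ) (hcη : 0 < cη) :
    (∃ C : ℝ, 0 < C ∧ ∀ a : ℝ, 0 < a → ∀ E : EtaSetup a cη, ∀ x ∉ Λ, ∀ u v : ℝ,
      |min u 0 * HpenU QS E.η (Aconst QS a) Λ x u v +
       min v 0 * HpenV QS E.η (Aconst QS a) Λ x u v| ≤
        C * Aconst QS a * ((min u 0) ^ 2 + (min v 0) ^ 2)) ∧
    (∀ u v : ℝ, min u 0 * pdU QS.Q u v + min v 0 * pdV QS.Q u v = 0) := by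
  constructor
  · refine ⟨5 * cη + 2, by linarith, ?_⟩
    intro a ha E x hx u v
    have hA : 0 ≤ Aconst QS a := Aconst_nonneg QS ha
    have hfun : Hpen QS E.η (Aconst QS a) Λ x = Qhat QS E.η (Aconst QS a) := by
      funext u' v'
      simp [Hpen, Set.indicator_of_notMem hx]
    have hU : ∀ u' v' : ℝ, HpenU QS E.η (Aconst QS a) Λ x u' v' =
        pdU (Qhat QS E.η (Aconst QS a)) u' v' := by
      intro u' v'; rw [HpenU, hfun]
    have hV : ∀ u' v' : ℝ, HpenV QS E.η (Aconst QS a) Λ x u' v' =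
        pdV (Qhat QS E.η (Aconst QS a)) u' v' := by
      intro u' v'; rw [HpenV, hfun]
    rw [hU, hV]
    rcases lt_or_ge u 0 with hu | hu <;> rcases lt_or_ge v 0 with hv | hv
    · rw [min_eq_left hu.le, min_eq_left hv.le]
      calc |u * pdU (Qhat QS E.η (Aconst QS a)) u v +
            v * pdV (Qhat QS E.η (Aconst QS a)) u v| ≤ _ + _ := abs_add_le _ _
        _ ≤ (5 * cη + 2) * Aconst QS a * u ^ 2 + (5 * cη + 2) * Aconst QS a * v ^ 2 :=
            add_le_add (qhatU_bound QS ha hcη E hA v hu) (qhatV_bound QS ha hcη E hA u hv)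
        _ = (5 * cη + 2) * Aconst QS a * (u ^ 2 + v ^ 2) := by ring
    · rw [min_eq_left hu.le, min_eq_right hv]
      simpa using qhatU_bound QS ha hcη E hA v hu
    · rw [min_eq_right hu, min_eq_left hv.le]
      simpa using qhatV_bound QS ha hcη E hA u hv
    · rw [min_eq_right hu, min_eq_right hv]
      simp [mul_nonneg (by linarith : (0:ℝ) ≤ 5 * cη + 2) hA]
  · intro u v
    rcases le_or_gt 0 u with hu | hu <;> rcases le_or_gt 0 v with hv | hv
    · rw [min_eq_right hu, min_eq_right hv]; ring
    · rw [min_eq_right hu, pdV_zero_of_neg QS u hv]; ring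
    · rw [min_eq_right hv, pdU_zero_of_neg QS v hu]; ring
    · rw [pdU_zero_of_neg QS v hu, pdV_zero_of_neg QS u hv]; ring
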